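/- Suppose Assumption (A) holds and r(n−1) ≤ 1/10. Then for every sign vector s ∈ {−1,+1}^{n−1}, the vertex P^(s) satisfies P^(s)_1 < 0 and f(P^(s)) ∈ E ∩ int(H). -/

import Mathlib

open Matrix Polynomial Finset

noncomputable section

/-- The companion-type matrix of the `n`-dimensional border-collision normal form:
`(i,1)` entry is `-a i`, `(i,i+1)` entries are `1`, all other entries `0`. -/
def bcMat (n : ℕ) (a : Fin n → ℝ) : Matrix (Fin n) (Fin n) ℝ :=
  Matrix.of fun i j =>
    (if (j : ℕ) = 0 then -a i else 0) + (if (j : ℕ) = (i : ℕ) + 1 then 1 else 0)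

/-- The vector `b = (1,0,…,0)`. -/
def bcVec (n : ℕ) : Fin n → ℝ := fun i => if (i : ℕ) = 0 then 1 else 0

/-- `ρ` is an eigenvalue of `M` (of algebraic multiplicity one, automatic when `|ρ| > r`)
and all remaining eigenvalues of `M` over `ℂ`, counted with multiplicity,
have modulus at most `r`. -/
def specA (n : ℕ) (M : Matrix (Fin n) (Fin n) ℝ) (ρ r : ℝ) : Prop :=
  ∃ lam : Fin (n - 1) → ℂ,
    (∀ j, ‖lam j‖ ≤ r) ∧
      M.charpoly.map (algebraMap ℝ ℂ) =
        (X - C (ρ : ℂ)) * ∏ j : Fin (n - 1), (X - C (lam j))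

/-- Assumption (A). -/
def assumptionA (n : ℕ) (aL aR : Fin n → ℝ) (α β r : ℝ) : Prop :=
  1 < α ∧ 1 < β ∧ 0 < r ∧ r < 1 ∧
    specA n (bcMat n aL) α r ∧ specA n (bcMat n aR) (-β) r

/-- The border-collision normal form map `f`. -/
def bcf (n : ℕ) (aL aR : Fin n → ℝ) (x : Fin n → ℝ) : Fin n → ℝ :=
  if ∀ i : Fin n, (i : ℕ) = 0 → x i ≤ 0 then (bcMat n aL).mulVec x + bcVec n
  else (bcMat n aR).mulVec x + bcVec n

/-- The fixed point `Y = (I − A_L)⁻¹ b`. -/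
def Ypt (n : ℕ) (aL : Fin n → ℝ) : Fin n → ℝ :=
  ((1 - bcMat n aL)⁻¹).mulVec (bcVec n)

/-- The row vector `u = (α^{n-1}, …, α, 1)`. -/
def uvec (n : ℕ) (α : ℝ) : Fin n → ℝ := fun i => α ^ (n - 1 - (i : ℕ))

/-- The hyperplane `E = {x : uᵀ(x − Y) = 0}`. -/
def Eset (n : ℕ) (aL : Fin n → ℝ) (α : ℝ) : Set (Fin n → ℝ) :=
  {x | ∑ i : Fin n, uvec n α i * (x i - Ypt n aL i) = 0}

/-- The slab `H = {x : |x_i| ≤ M_i r^{i-1}, i = 2,…,n}` with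
`M_i = (2α/(α−1))·binom(n−1,i−1)`. -/
def Hset (n : ℕ) (α r : ℝ) : Set (Fin n → ℝ) :=
  {x | ∀ i : Fin n, 1 ≤ (i : ℕ) →
    |x i| ≤ 2 * α / (α - 1) * ((n - 1).choose (i : ℕ) : ℝ) * r ^ (i : ℕ)}

/-- The first component `C₁` of the point `C`. -/
def Cfirst (n : ℕ) (aL aR : Fin n → ℝ) (α : ℝ) : ℝ :=
  (1 - 1 / (1 - bcMat n aL).det +
      1 / (1 - bcMat n aL).det *
        ∑ k ∈ univ.filter (fun k : Fin n => 1 ≤ (k : ℕ)),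
          α ^ (-((k : ℕ) : ℤ)) *
            ∑ j ∈ univ.filter (fun j : Fin n => (k : ℕ) ≤ (j : ℕ)), aL j) /
    ∑ i : Fin n, α ^ (-((i : ℕ) : ℤ)) * aR i

/-- The point `C = (C₁, 0, …, 0)`. -/
def Cpt (n : ℕ) (aL aR : Fin n → ℝ) (α : ℝ) : Fin n → ℝ :=
  fun i => if (i : ℕ) = 0 then Cfirst n aL aR α else 0

/-- The polytope `Ω = Conv({C} ∪ (E ∩ H))`. -/
def OmegaSet (n : ℕ) (aL aR : Fin n → ℝ) (α r : ℝ) : Set (Fin n → ℝ) :=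
  convexHull ℝ ({Cpt n aL aR α} ∪ (Eset n aL α ∩ Hset n α r))

/-- The cone `Ψ` of scalar multiples of vectors `(1, m₁, …, m_{n-1})` with
`|m_i| ≤ N_i r^{i-1}`, `N_i = ((min(α,β)−1)/2)·binom(n−1,i−1)`. -/
def PsiSet (n : ℕ) (α β r : ℝ) : Set (Fin n → ℝ) :=
  {x | ∃ γ : ℝ, ∃ v : Fin n → ℝ,
    (∀ i : Fin n, (i : ℕ) = 0 → v i = 1) ∧
    (∀ i : Fin n, 1 ≤ (i : ℕ) →
      |v i| ≤ (min α β - 1) / 2 * ((n - 1).choose ((i : ℕ) - 1) : ℝ) * r ^ ((i : ℕ) - 1)) ∧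
    x = γ • v}

/-- `P` is the vertex `P^(s)`: the point of `E` whose `i`-th component, `i = 2,…,n`,
is `s_{i-1}·M_i r^{i-1}`. -/
def isVertexP (n : ℕ) (aL : Fin n → ℝ) (α r : ℝ) (s : Fin (n - 1) → ℝ)
    (P : Fin n → ℝ) : Prop :=
  P ∈ Eset n aL α ∧
    ∀ i : Fin n, ∀ _h : 1 ≤ (i : ℕ),
      P i = s ⟨(i : ℕ) - 1, by have := i.isLt; omega⟩ *
        (2 * α / (α - 1) * ((n - 1).choose (i : ℕ) : ℝ) * r ^ (i : ℕ))

/-- The `k`-th elementary symmetric polynomial of `η`. -/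
def esym {m : ℕ} (η : Fin m → ℂ) (k : ℕ) : ℂ :=
  ∑ t ∈ powersetCard k univ, ∏ j ∈ t, η j

end

section AuxBC

/-- General companion-type matrix over a commutative ring. -/
def compM {R : Type*} [CommRing R] (n : ℕ) (a : Fin n → R) (x : R) :
    Matrix (Fin n) (Fin n) R :=
  Matrix.of fun i j =>
    (if (j : ℕ) = 0 then a i else 0) + (if (j : ℕ) = (i : ℕ) + 1 then -1 else 0) +
      (if i = j then x else 0)

theorem compM_det {R : Type*} [CommRing R] (n : ℕ) (a : Fin n → R) (x : R) :
    (compM n a x).det = x ^ n + ∑ i : Fin n, a i * x ^ (n - 1 - (i : ℕ)) := by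
  induction n with
  | zero => simp [Matrix.det_fin_zero]
  | succ n ih =>
    rw [Matrix.det_succ_row _ (Fin.last n)]
    have hrow : ∀ j : Fin (n+1), compM (n+1) a x (Fin.last n) j =
        (if (j:ℕ) = 0 then a (Fin.last n) else 0) + (if j = Fin.last n then x else 0) := by
      intro j
      simp only [compM, Matrix.of_apply, Fin.val_last]
      have h1 : ¬ ((j:ℕ) = n + 1) := by omega
      rw [if_neg h1]
      have h2 : (Fin.last n = j) ↔ (j = Fin.last n) := eq_comm
      simp [h2]
    -- the two minors
    have hminor2 : (compM (n+1) a x).submatrix (Fin.last n).succAbove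
        (Fin.last n).succAbove = compM n (fun i => a i.castSucc) x := by
      ext i j
      simp only [Matrix.submatrix_apply, Fin.succAbove_last, compM, Matrix.of_apply,
        Fin.coe_castSucc]
      congr 1
      simp [Fin.castSucc_inj]
    have hminor1 : ((compM (n+1) a x).submatrix (Fin.last n).succAbove
        (0 : Fin (n+1)).succAbove).det = (-1 : R) ^ n := by
      have hentry : ∀ i j : Fin n, (compM (n+1) a x).submatrix (Fin.last n).succAbove
          (0 : Fin (n+1)).succAbove i j =
          (if (j:ℕ) = (i:ℕ) then -1 else 0) + (if (i:ℕ) = (j:ℕ)+1 then x else 0) := by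
        intro i j
        have h0 : (0 : Fin (n+1)).succAbove j = j.succ := rfl
        simp only [Matrix.submatrix_apply, Fin.succAbove_last, h0, compM, Matrix.of_apply,
          Fin.val_succ, Fin.coe_castSucc]
        have h1 : ¬ ((j:ℕ) + 1 = 0) := by omega
        rw [if_neg h1]
        have h2 : ((j:ℕ) + 1 = (i:ℕ) + 1) ↔ ((j:ℕ) = (i:ℕ)) := by omega
        have h3 : (i.castSucc = j.succ) ↔ ((i:ℕ) = (j:ℕ)+1) := by
          rw [Fin.ext_iff]; simp
        simp [h2, h3]
      rw [Matrix.det_of_lowerTriangular]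
      · have : ∀ i : Fin n, (compM (n+1) a x).submatrix (Fin.last n).succAbove
            (0 : Fin (n+1)).succAbove i i = -1 := by
          intro i; rw [hentry]; simp
        rw [Finset.prod_congr rfl fun i _ => this i]
        simp
      · intro i j hij
        rw [hentry]
        have h1 : ¬ ((j:ℕ) = (i:ℕ)) := by
          simp only [OrderDual.toDual_lt_toDual] at hij
          exact fun h => absurd (Fin.ext h : j = i) (ne_of_gt hij)
        have h2 : ¬ ((i:ℕ) = (j:ℕ)+1) := by
          simp only [OrderDual.toDual_lt_toDual] at hij
          have := (Fin.lt_iff_val_lt_val.mp hij); omega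
        rw [if_neg h1, if_neg h2, add_zero]
    -- now compute the expansion sum
    have hsum : ∀ j : Fin (n+1), (-1:R) ^ ((Fin.last n : ℕ) + (j:ℕ)) *
        compM (n+1) a x (Fin.last n) j *
        ((compM (n+1) a x).submatrix (Fin.last n).succAbove j.succAbove).det =
        (if (j:ℕ) = 0 then (-1:R)^(n + (j:ℕ)) * a (Fin.last n) *
          ((compM (n+1) a x).submatrix (Fin.last n).succAbove j.succAbove).det else 0) +
        (if j = Fin.last n then (-1:R)^(n + (j:ℕ)) * x *
          ((compM (n+1) a x).submatrix (Fin.last n).succAbove j.succAbove).det else 0) := by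
      intro j
      rw [hrow, Fin.val_last]
      split_ifs <;> ring
    rw [Finset.sum_congr rfl fun j _ => hsum j, Finset.sum_add_distrib]
    rw [Finset.sum_ite_eq' univ (Fin.last n), if_pos (Finset.mem_univ _)]
    have e0 : ∑ j : Fin (n+1), (if (j:ℕ) = 0 then (-1:R)^(n + (j:ℕ)) * a (Fin.last n) *
        ((compM (n+1) a x).submatrix (Fin.last n).succAbove j.succAbove).det else 0) =
        (-1:R)^n * a (Fin.last n) *
        ((compM (n+1) a x).submatrix (Fin.last n).succAbove (0:Fin (n+1)).succAbove).det := by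
      rw [Finset.sum_eq_single (0 : Fin (n+1))]
      · simp
      · intro b _ hb
        rw [if_neg (fun h => hb (Fin.ext (by simp [h])))]
      · simp
    rw [e0, hminor1, hminor2, ih]
    rw [Fin.sum_univ_castSucc (f := fun i : Fin (n+1) => a i * x ^ (n + 1 - 1 - (i:ℕ)))]
    have hpow : ∀ i : Fin n, x * (a i.castSucc * x ^ (n - 1 - (i:ℕ))) =
        a i.castSucc * x ^ (n + 1 - 1 - (i:ℕ)) := by
      intro i
      have : n + 1 - 1 - (i:ℕ) = (n - 1 - (i:ℕ)) + 1 := by omega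
      rw [this, pow_succ]; ring
    have h1 : (-1:R)^(n+n) = 1 := Even.neg_one_pow ⟨n, rfl⟩
    have hsgn : (-1:R)^n * a (Fin.last n) * (-1:R)^n = a (Fin.last n) := by
      rw [show (-1:R)^n * a (Fin.last n) * (-1:R)^n = a (Fin.last n) * ((-1:R)^(n+n)) by
        rw [pow_add]; ring, h1, mul_one]
    simp only [Fin.val_last, Fin.coe_castSucc]
    rw [h1, hsgn, one_mul, mul_add, Finset.mul_sum,
      Finset.sum_congr rfl fun i _ => hpow i]
    have h2 : n + 1 - 1 - n = 0 := by omega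
    rw [h2, pow_zero, mul_one, ← pow_succ']
    ring

theorem bcMat_charmatrix (n : ℕ) (a : Fin n → ℝ) :
    (bcMat n a).charmatrix = compM n (fun i => C (a i)) X := by
  refine Matrix.ext fun i j => ?_
  rw [Matrix.charmatrix_apply]
  simp only [compM, bcMat, Matrix.of_apply, Matrix.diagonal_apply, Fin.ext_iff]
  split_ifs <;> first
    | omega
    | (simp only [map_add, map_neg, map_zero, Polynomial.C_1]; ring)

theorem bcMat_charpoly (n : ℕ) (a : Fin n → ℝ) :
    (bcMat n a).charpoly = X ^ n + ∑ i : Fin n, C (a i) * X ^ (n - 1 - (i : ℕ)) := by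
  rw [Matrix.charpoly, bcMat_charmatrix, compM_det]

theorem one_sub_bcMat (n : ℕ) (a : Fin n → ℝ) :
    (1 : Matrix (Fin n) (Fin n) ℝ) - bcMat n a = compM n a 1 := by
  refine Matrix.ext fun i j => ?_
  simp only [Matrix.sub_apply, Matrix.one_apply, compM, bcMat, Matrix.of_apply, Fin.ext_iff]
  split_ifs <;> first | omega | ring

theorem det_one_sub_bcMat (n : ℕ) (a : Fin n → ℝ) :
    ((1 : Matrix (Fin n) (Fin n) ℝ) - bcMat n a).det = 1 + ∑ i : Fin n, a i := by
  rw [one_sub_bcMat, compM_det]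
  simp

theorem map_bcMat_charpoly (n : ℕ) (a : Fin n → ℝ) :
    (bcMat n a).charpoly.map (algebraMap ℝ ℂ) =
      X ^ n + ∑ i : Fin n, C ((a i : ℂ)) * X ^ (n - 1 - (i : ℕ)) := by
  rw [bcMat_charpoly]
  simp [Polynomial.map_add, Polynomial.map_pow, Polynomial.map_sum, Polynomial.map_mul]

theorem esym_abs_le {m : ℕ} (lam : Fin m → ℂ) (r : ℝ) (hr0 : 0 ≤ r)
    (hlam : ∀ j, ‖lam j‖ ≤ r) (d : ℕ) :
    ‖esym lam d‖ ≤ (m.choose d : ℝ) * r ^ d := by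
  unfold esym
  calc ‖∑ t ∈ powersetCard d univ, ∏ j ∈ t, lam j‖
      ≤ ∑ t ∈ powersetCard d univ, ‖∏ j ∈ t, lam j‖ := by
        exact norm_sum_le _ _
    _ ≤ ∑ t ∈ powersetCard d univ, r ^ d := by
        refine Finset.sum_le_sum fun t ht => ?_
        rw [norm_prod]
        have hcard : t.card = d := (Finset.mem_powersetCard.mp ht).2
        calc ∏ j ∈ t, ‖lam j‖ ≤ ∏ j ∈ t, r :=
              Finset.prod_le_prod (fun j _ => norm_nonneg _) (fun j _ => hlam j)
          _ = r ^ d := by rw [Finset.prod_const, hcard]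
    _ = (m.choose d : ℝ) * r ^ d := by
        rw [Finset.sum_const, Finset.card_powersetCard, Finset.card_univ, Fintype.card_fin,
          nsmul_eq_mul]

theorem prod_X_sub_C_coeff_fin {m : ℕ} (lam : Fin m → ℂ) {k : ℕ} (hk : k ≤ m) :
    (∏ j : Fin m, (X - C (lam j))).coeff k = (-1) ^ (m - k) * esym lam (m - k) := by
  have h1 : (∏ j : Fin m, (X - C (lam j))) =
      (Multiset.map (fun t => X - C t) (Multiset.map lam Finset.univ.val)).prod := by
    rw [Multiset.map_map]
    rfl
  have hcard : Multiset.card (Multiset.map lam Finset.univ.val) = m := by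
    simp
  rw [h1, Multiset.prod_X_sub_C_coeff _ (by rw [hcard]; exact hk), hcard,
    Finset.esymm_map_val]
  rfl

theorem specA_facts (n : ℕ) (hn : 1 ≤ n) (a : Fin n → ℝ) (ρ r : ℝ) (hr0 : 0 ≤ r)
    (h : specA n (bcMat n a) ρ r) :
    (∀ i : Fin n, |a i| ≤ ((n-1).choose ((i:ℕ)+1) : ℝ) * r^((i:ℕ)+1) +
        |ρ| * ((n-1).choose (i:ℕ) : ℝ) * r^(i:ℕ)) ∧
    (ρ^n + ∑ i : Fin n, a i * ρ^(n-1-(i:ℕ)) = 0) ∧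
    (r < 1 → ρ ≠ 1 → 1 + ∑ i : Fin n, a i ≠ 0) := by
  obtain ⟨lam, hlam, hfac⟩ := h
  rw [map_bcMat_charpoly] at hfac
  set q : Polynomial ℂ := ∏ j : Fin (n-1), (X - C (lam j)) with hq
  -- coefficient identity
  have hcoeff : ∀ i : Fin n, (a i : ℂ) =
      (X * q).coeff (n - 1 - (i:ℕ)) - (ρ : ℂ) * q.coeff (n - 1 - (i:ℕ)) := by
    intro i
    have hL : (X ^ n + ∑ i' : Fin n, C ((a i' : ℂ)) * X ^ (n - 1 - (i':ℕ))).coeff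
        (n - 1 - (i:ℕ)) = (a i : ℂ) := by
      rw [Polynomial.coeff_add, Polynomial.coeff_X_pow,
        if_neg (by have := i.isLt; omega), Polynomial.finset_sum_coeff]
      rw [Finset.sum_eq_single i]
      · simp [Polynomial.coeff_C_mul, Polynomial.coeff_X_pow]
      · intro b _ hb
        rw [Polynomial.coeff_C_mul, Polynomial.coeff_X_pow, if_neg, mul_zero]
        have hb' : (b : ℕ) ≠ (i : ℕ) := fun hh => hb (Fin.ext hh)
        have := i.isLt; have := b.isLt; omega
      · simp
    have hR : ((X - C (ρ:ℂ)) * q).coeff (n - 1 - (i:ℕ)) =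
        (X * q).coeff (n - 1 - (i:ℕ)) - (ρ : ℂ) * q.coeff (n - 1 - (i:ℕ)) := by
      rw [sub_mul, Polynomial.coeff_sub, Polynomial.coeff_C_mul]
    rw [← hL, hfac, hR]
  refine ⟨?_, ?_, ?_⟩
  · -- coefficient bounds
    intro i
    have hi := i.isLt
    have key : ‖((a i : ℂ))‖ ≤
        (((n-1).choose ((i:ℕ)+1) : ℝ) * r^((i:ℕ)+1)) + |ρ| * (((n-1).choose (i:ℕ) : ℝ) * r^(i:ℕ)) := by
      rcases Nat.lt_or_ge ((i:ℕ)+1) n with hlt | hge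
      · -- d = n-1-i ≥ 1
        have hd : n - 1 - (i:ℕ) = (n - 2 - (i:ℕ)) + 1 := by omega
        have h1 : (X * q).coeff (n - 1 - (i:ℕ)) = q.coeff (n - 2 - (i:ℕ)) := by
          rw [hd, Polynomial.coeff_X_mul]
        have e1 : q.coeff (n - 2 - (i:ℕ)) = (-1)^((i:ℕ)+1) * esym lam ((i:ℕ)+1) := by
          rw [prod_X_sub_C_coeff_fin lam (by omega : n - 2 - (i:ℕ) ≤ n-1),
            show n-1 - (n - 2 - (i:ℕ)) = (i:ℕ)+1 by omega]
        have e2 : q.coeff (n - 1 - (i:ℕ)) = (-1)^((i:ℕ)) * esym lam (i:ℕ) := by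
          rw [prod_X_sub_C_coeff_fin lam (by omega : n - 1 - (i:ℕ) ≤ n-1),
            show n-1 - (n - 1 - (i:ℕ)) = (i:ℕ) by omega]
        rw [hcoeff i, h1, e1, e2]
        calc ‖(-1)^((i:ℕ)+1) * esym lam ((i:ℕ)+1) -
              (ρ:ℂ) * ((-1)^((i:ℕ)) * esym lam (i:ℕ))‖
            ≤ ‖(-1)^((i:ℕ)+1) * esym lam ((i:ℕ)+1)‖ +
              ‖(ρ:ℂ) * ((-1)^((i:ℕ)) * esym lam (i:ℕ))‖ :=
              norm_sub_le _ _
          _ ≤ _ := by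
              rw [norm_mul, norm_mul, norm_mul, norm_pow, norm_pow]
              simp only [norm_neg, norm_one, one_pow, one_mul, Complex.norm_real, Real.norm_eq_abs]
              exact add_le_add (esym_abs_le lam r hr0 hlam _)
                (mul_le_mul_of_nonneg_left (esym_abs_le lam r hr0 hlam _) (abs_nonneg ρ))
      · -- i = n-1, d = 0
        have hd : n - 1 - (i:ℕ) = 0 := by omega
        have hieq : (i:ℕ) = n-1 := by omega
        have h1 : (X * q).coeff 0 = 0 := by
          rw [Polynomial.mul_coeff_zero, Polynomial.coeff_X_zero, zero_mul]
        have e2 : q.coeff 0 = (-1)^(n-1) * esym lam (n-1) := by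
          rw [prod_X_sub_C_coeff_fin lam (Nat.zero_le (n-1)), Nat.sub_zero]
        rw [hcoeff i, hd, h1, e2, zero_sub]
        rw [norm_neg, norm_mul, norm_mul, norm_pow]
        simp only [norm_neg, norm_one, one_pow, one_mul, Complex.norm_real, Real.norm_eq_abs]
        rw [hieq]
        have h0 : (0:ℝ) ≤ ((n-1).choose ((n-1)+1) : ℝ) * r^((n-1)+1) := by positivity
        have h2 : |ρ| * ‖esym lam (n-1)‖ ≤ |ρ| * (((n-1).choose (n-1) : ℝ) * r^(n-1)) :=
          mul_le_mul_of_nonneg_left (esym_abs_le lam r hr0 hlam _) (abs_nonneg ρ)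
        linarith
    rw [Complex.norm_real, Real.norm_eq_abs] at key
    calc |a i| ≤ _ := key
      _ = ((n-1).choose ((i:ℕ)+1) : ℝ) * r^((i:ℕ)+1) +
          |ρ| * ((n-1).choose (i:ℕ) : ℝ) * r^(i:ℕ) := by ring
  · -- eigenvalue equation
    have := congrArg (Polynomial.eval (ρ : ℂ)) hfac
    simp only [Polynomial.eval_add, Polynomial.eval_pow, Polynomial.eval_X,
      Polynomial.eval_finset_sum, Polynomial.eval_mul, Polynomial.eval_C,
      Polynomial.eval_sub, sub_self, zero_mul] at this
    have h2 : ((ρ^n + ∑ i : Fin n, a i * ρ^(n-1-(i:ℕ)) : ℝ) : ℂ) = 0 := by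
      push_cast
      convert this using 2
    exact_mod_cast h2
  · -- nonvanishing at 1
    intro hr1 hρ1
    have := congrArg (Polynomial.eval (1 : ℂ)) hfac
    simp only [Polynomial.eval_add, Polynomial.eval_pow, Polynomial.eval_X,
      Polynomial.eval_finset_sum, Polynomial.eval_mul, Polynomial.eval_C,
      Polynomial.eval_sub, Polynomial.eval_prod, one_pow, mul_one] at this
    have hq1 : Polynomial.eval (1:ℂ) q = ∏ j : Fin (n-1), (1 - lam j) := by
      rw [hq, Polynomial.eval_prod]
      exact Finset.prod_congr rfl fun j _ => by simp
    rw [hq1] at this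
    have hne : ((1:ℂ) - (ρ:ℂ)) * ∏ j : Fin (n-1), (1 - lam j) ≠ 0 := by
      apply mul_ne_zero
      · intro hh
        apply hρ1
        have h9 : ((ρ:ℝ):ℂ) = ((1:ℝ):ℂ) := by
          push_cast; linear_combination -hh
        exact_mod_cast h9
      · apply Finset.prod_ne_zero_iff.mpr
        intro j _
        intro hh
        have h1 : lam j = 1 := by linear_combination -hh
        have := hlam j
        rw [h1] at this
        simp at this
        linarith
    intro hcon
    apply hne
    rw [← this]
    have h8 : ((1 + ∑ i : Fin n, a i : ℝ) : ℂ) = 0 := by exact_mod_cast hcon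
    push_cast at h8
    convert h8 using 2

theorem bcMat_mulVec (n : ℕ) (hn : 0 < n) (a : Fin n → ℝ) (x : Fin n → ℝ) (i : Fin n) :
    (bcMat n a *ᵥ x) i =
      -a i * x ⟨0, hn⟩ + (if h : (i:ℕ)+1 < n then x ⟨(i:ℕ)+1, h⟩ else 0) := by
  simp only [Matrix.mulVec, dotProduct, bcMat, Matrix.of_apply, add_mul]
  rw [Finset.sum_add_distrib]
  congr 1
  · rw [Finset.sum_eq_single (⟨0, hn⟩ : Fin n)]
    · simp
    · intro b _ hb
      rw [if_neg (by simpa [Fin.ext_iff] using hb), zero_mul]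
    · simp
  · split_ifs with h
    · rw [Finset.sum_eq_single (⟨(i:ℕ)+1, h⟩ : Fin n)]
      · simp
      · intro b _ hb
        rw [if_neg (by simpa [Fin.ext_iff, eq_comm] using hb), zero_mul]
      · simp
    · refine Finset.sum_eq_zero fun j _ => ?_
      rw [if_neg (by have := j.isLt; omega), zero_mul]

theorem uvec_vecMul (n : ℕ) (hn : 1 ≤ n) (a : Fin n → ℝ) (α : ℝ)
    (heig : α ^ n + ∑ i : Fin n, a i * α ^ (n - 1 - (i:ℕ)) = 0) :
    uvec n α ᵥ* bcMat n a = α • uvec n α := by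
  funext j
  simp only [Matrix.vecMul, dotProduct, bcMat, Matrix.of_apply, Pi.smul_apply,
    smul_eq_mul, uvec, mul_add]
  rcases Nat.eq_zero_or_pos (j : ℕ) with hj | hj
  · rw [Finset.sum_add_distrib]
    have h1 : ∑ i : Fin n, α ^ (n-1-(i:ℕ)) * (if (j:ℕ) = 0 then -a i else 0) =
        -(∑ i : Fin n, a i * α ^ (n-1-(i:ℕ))) := by
      rw [← Finset.sum_neg_distrib]
      exact Finset.sum_congr rfl fun i _ => by rw [if_pos hj]; ring
    have h2 : ∑ i : Fin n, α ^ (n-1-(i:ℕ)) * (if (j:ℕ) = (i:ℕ)+1 then 1 else 0) = 0 := by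
      refine Finset.sum_eq_zero fun i _ => by rw [if_neg (by omega), mul_zero]
    rw [h1, h2, add_zero, hj]
    have : α * α ^ (n - 1 - 0) = α ^ n := by
      rw [Nat.sub_zero, ← pow_succ']
      congr 1
      omega
    rw [this]
    linarith [heig]
  · rw [Finset.sum_add_distrib]
    have h1 : ∑ i : Fin n, α ^ (n-1-(i:ℕ)) * (if (j:ℕ) = 0 then -a i else 0) = 0 := by
      refine Finset.sum_eq_zero fun i _ => by rw [if_neg (by omega), mul_zero]
    have h2 : ∑ i : Fin n, α ^ (n-1-(i:ℕ)) * (if (j:ℕ) = (i:ℕ)+1 then 1 else 0) =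
        α * α ^ (n-1-(j:ℕ)) := by
      rw [Finset.sum_eq_single (⟨(j:ℕ)-1, by have := j.isLt; omega⟩ : Fin n)]
      · rw [if_pos (by simp; omega), mul_one, ← pow_succ']
        congr 1
        have := j.isLt; simp; omega
      · intro b _ hb
        have hbv : (b:ℕ) = (j:ℕ) - 1 → False := fun hv => hb (Fin.ext (by simp [hv]))
        rw [if_neg (fun hh => hbv (by omega)), mul_zero]
      · simp
    rw [h1, h2, zero_add]

theorem uvec_dot_bcVec (n : ℕ) (hn : 1 ≤ n) (α : ℝ) :
    ∑ i : Fin n, uvec n α i * bcVec n i = α ^ (n-1) := by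
  rw [Finset.sum_eq_single (⟨0, hn⟩ : Fin n)]
  · simp [uvec, bcVec]
  · intro b _ hb
    simp only [bcVec]
    rw [if_neg (by simpa [Fin.ext_iff] using hb), mul_zero]
  · simp

theorem uvec_dot_Ypt (n : ℕ) (hn : 1 ≤ n) (a : Fin n → ℝ) (α : ℝ) (hα : α ≠ 1)
    (hdet : 1 + ∑ i : Fin n, a i ≠ 0)
    (heig : α ^ n + ∑ i : Fin n, a i * α ^ (n - 1 - (i:ℕ)) = 0) :
    ∑ i : Fin n, uvec n α i * Ypt n a i = α ^ (n-1) / (1 - α) := by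
  have hdet' : IsUnit ((1 : Matrix (Fin n) (Fin n) ℝ) - bcMat n a).det := by
    rw [det_one_sub_bcMat]
    exact isUnit_iff_ne_zero.mpr hdet
  have hvm : uvec n α ᵥ* ((1 : Matrix (Fin n) (Fin n) ℝ) - bcMat n a) =
      (1 - α) • uvec n α := by
    rw [Matrix.vecMul_sub, Matrix.vecMul_one, uvec_vecMul n hn a α heig, sub_smul, one_smul]
  have hinv : uvec n α = (1 - α) • (uvec n α ᵥ* ((1:Matrix (Fin n) (Fin n) ℝ) - bcMat n a)⁻¹) := by
    have h := congrArg (fun v => v ᵥ* ((1:Matrix (Fin n) (Fin n) ℝ) - bcMat n a)⁻¹) hvm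
    rw [Matrix.vecMul_vecMul, Matrix.mul_nonsing_inv _ hdet', Matrix.vecMul_one,
      Matrix.smul_vecMul] at h
    exact h
  have key : ∑ i : Fin n, uvec n α i * Ypt n a i = uvec n α ⬝ᵥ Ypt n a := rfl
  rw [key]
  unfold Ypt
  rw [Matrix.dotProduct_mulVec]
  have h1α : (1:ℝ) - α ≠ 0 := fun hh => hα (by linarith)
  have hfin : (uvec n α ᵥ* ((1:Matrix (Fin n) (Fin n) ℝ) - bcMat n a)⁻¹) =
      (1-α)⁻¹ • uvec n α := by
    have h2 := congrArg (fun w : Fin n → ℝ => (1-α)⁻¹ • w) hinv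
    simp only [smul_smul, inv_mul_cancel₀ h1α, one_smul] at h2
    exact h2.symm
  rw [hfin, smul_dotProduct]
  have : uvec n α ⬝ᵥ bcVec n = α ^ (n-1) := uvec_dot_bcVec n hn α
  rw [this]
  rw [smul_eq_mul, div_eq_inv_mul]

theorem sum_split0 (n : ℕ) (hn : 0 < n) (g : Fin n → ℝ) :
    ∑ i : Fin n, g i = g ⟨0, hn⟩ +
      ∑ i ∈ univ.filter (fun i : Fin n => 1 ≤ (i:ℕ)), g i := by
  rw [← Finset.sum_filter_add_sum_filter_not univ (fun i : Fin n => 1 ≤ (i:ℕ)) g]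
  rw [add_comm]
  congr 1
  have : univ.filter (fun i : Fin n => ¬ 1 ≤ (i:ℕ)) = {(⟨0, hn⟩ : Fin n)} := by
    ext j
    simp only [Finset.mem_filter, Finset.mem_univ, true_and, Finset.mem_singleton,
      Fin.ext_iff, not_le]
    omega
  rw [this, Finset.sum_singleton]

theorem choose_rpow_sum_le (n : ℕ) (hn : 2 ≤ n) (r : ℝ) (hr : 0 < r)
    (hrn : r * ((n : ℝ) - 1) ≤ 1 / 10) :
    ∑ i ∈ univ.filter (fun i : Fin n => 1 ≤ (i:ℕ)),
      ((n - 1).choose (i:ℕ) : ℝ) * r ^ (i:ℕ) ≤ 1 / 9 := by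
  have hcast : ((n - 1 : ℕ) : ℝ) = (n : ℝ) - 1 := by
    push_cast [Nat.cast_sub (by omega : 1 ≤ n)]; ring
  have hterm : ∀ i : Fin n, ((n - 1).choose (i:ℕ) : ℝ) * r ^ (i:ℕ) ≤ (1/10) ^ (i:ℕ) := by
    intro i
    have h1 : ((n - 1).choose (i:ℕ) : ℝ) ≤ ((n - 1 : ℕ) : ℝ) ^ (i:ℕ) := by
      exact_mod_cast Nat.cast_le.mpr (Nat.choose_le_pow (n-1) (i:ℕ))
    calc ((n - 1).choose (i:ℕ) : ℝ) * r ^ (i:ℕ)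
        ≤ ((n - 1 : ℕ) : ℝ) ^ (i:ℕ) * r ^ (i:ℕ) :=
          mul_le_mul_of_nonneg_right h1 (pow_nonneg hr.le _)
      _ = (((n - 1 : ℕ) : ℝ) * r) ^ (i:ℕ) := by rw [mul_pow]
      _ ≤ (1/10) ^ (i:ℕ) := by
          apply pow_le_pow_left₀
          · have : (0:ℝ) ≤ ((n - 1 : ℕ) : ℝ) := Nat.cast_nonneg _
            positivity
          · rw [hcast]; linarith [hrn]
  have h2 : ∑ i ∈ univ.filter (fun i : Fin n => 1 ≤ (i:ℕ)),
      ((n - 1).choose (i:ℕ) : ℝ) * r ^ (i:ℕ) ≤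
      ∑ i ∈ univ.filter (fun i : Fin n => 1 ≤ (i:ℕ)), (1/10:ℝ) ^ (i:ℕ) :=
    Finset.sum_le_sum fun i _ => hterm i
  have h3 : ∑ i ∈ univ.filter (fun i : Fin n => 1 ≤ (i:ℕ)), (1/10:ℝ) ^ (i:ℕ) ≤ 1/9 := by
    have hsplit := sum_split0 n (by omega) (fun i : Fin n => (1/10:ℝ) ^ (i:ℕ))
    have h4 : ∑ i : Fin n, (1/10:ℝ) ^ (i:ℕ) = ∑ k ∈ Finset.range n, (1/10:ℝ) ^ k :=
      Fin.sum_univ_eq_sum_range _ n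
    have h5 : ∑ k ∈ Finset.range n, (1/10:ℝ) ^ k = ((1/10:ℝ)^n - 1)/((1/10) - 1) :=
      geom_sum_eq (by norm_num) n
    have h6 : ((1/10:ℝ)^n - 1)/((1/10) - 1) ≤ 10/9 := by
      rw [div_le_iff_of_neg (by norm_num : (1/10:ℝ) - 1 < 0)]
      have : (0:ℝ) ≤ (1/10:ℝ)^n := by positivity
      nlinarith
    rw [h4, h5] at hsplit
    simp only [pow_zero] at hsplit
    linarith [hsplit, h6]
  linarith

end AuxBC

set_option maxHeartbeats 2000000 in
/-- Under Assumption (A) and `r(n−1) ≤ 1/10`, each vertex `P^(s)` has negative first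
component and maps under `f` into `E ∩ int(H)`. -/
theorem stmt_7 (n : ℕ) (hn : 2 ≤ n) (aL aR : Fin n → ℝ) (α β r : ℝ)
    (hA : assumptionA n aL aR α β r)
    (hrn : r * ((n : ℝ) - 1) ≤ 1 / 10)
    (s : Fin (n - 1) → ℝ) (hs : ∀ j, s j = 1 ∨ s j = -1)
    (P : Fin n → ℝ) (hP : isVertexP n aL α r s P) :
    P ⟨0, by omega⟩ < 0 ∧
    bcf n aL aR P ∈ Eset n aL α ∩ interior (Hset n α r) := by
  obtain ⟨hα, hβ', hr, hr1, hspecL, hspecR⟩ := hA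
  have hn0 : 0 < n := by omega
  have hn1 : 1 ≤ n := by omega
  have hαpos : 0 < α := by linarith
  have hβ1 : 0 < α - 1 := by linarith
  obtain ⟨habs, heig, hdet0⟩ := specA_facts n hn1 aL α r hr.le hspecL
  have hdet : 1 + ∑ i : Fin n, aL i ≠ 0 := hdet0 hr1 (by intro h; rw [h] at hα; linarith)
  obtain ⟨hPE, hPi⟩ := hP
  have i0lt : (0:ℕ) < n := hn0
  -- bounds on P entries
  have hMc : ∀ i : Fin n, (0:ℝ) ≤ 2 * α / (α - 1) * ((n - 1).choose (i:ℕ) : ℝ) * r ^ (i:ℕ) := by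
    intro i
    have h1 : (0:ℝ) ≤ 2 * α / (α - 1) := div_nonneg (by linarith) (by linarith)
    positivity
  have hPabs : ∀ i : Fin n, 1 ≤ (i:ℕ) →
      |P i| ≤ 2 * α / (α - 1) * ((n - 1).choose (i:ℕ) : ℝ) * r ^ (i:ℕ) := by
    intro i hi
    rw [hPi i hi, abs_mul]
    rcases hs ⟨(i:ℕ) - 1, by have := i.isLt; omega⟩ with h | h <;>
      rw [h] <;> simp [abs_of_nonneg (hMc i)]
  have hgeom := choose_rpow_sum_le n hn r hr hrn
  -- key eigen facts
  have hY := uvec_dot_Ypt n hn1 aL α (by intro h; rw [h] at hα; linarith) hdet heig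
  have hPsum : ∑ i : Fin n, uvec n α i * P i = α ^ (n-1) / (1 - α) := by
    have h0 : ∑ i : Fin n, uvec n α i * (P i - Ypt n aL i) = 0 := hPE
    have h1 : ∑ i : Fin n, (uvec n α i * P i - uvec n α i * Ypt n aL i) = 0 := by
      rw [← h0]; exact Finset.sum_congr rfl fun i _ => by ring
    rw [Finset.sum_sub_distrib] at h1
    have := sub_eq_zero.mp h1
    rw [this, hY]
  -- split off the first coordinate
  have hsplit := sum_split0 n hn0 (fun i => uvec n α i * P i)
  set T := ∑ i ∈ univ.filter (fun i : Fin n => 1 ≤ (i:ℕ)), uvec n α i * P i with hTdef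
  have hu0 : uvec n α (⟨0, hn0⟩ : Fin n) = α ^ (n-1) := by
    simp [uvec]
  rw [hPsum, hu0] at hsplit
  -- bound on T
  have hTabs : |T| ≤ α ^ (n-2) * (2 * α / (α - 1)) * (1/9) := by
    have hstep : ∀ i ∈ univ.filter (fun i : Fin n => 1 ≤ (i:ℕ)),
        |uvec n α i * P i| ≤ α ^ (n-2) * (2 * α / (α - 1)) *
          (((n - 1).choose (i:ℕ) : ℝ) * r ^ (i:ℕ)) := by
      intro i hi
      have hi1 : 1 ≤ (i:ℕ) := (Finset.mem_filter.mp hi).2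
      rw [abs_mul]
      have hu : |uvec n α i| ≤ α ^ (n-2) := by
        have huv : uvec n α i = α ^ (n - 1 - (i:ℕ)) := rfl
        rw [huv, abs_of_pos (pow_pos hαpos _)]
        exact pow_le_pow_right₀ hα.le (by have := i.isLt; omega)
      calc |uvec n α i| * |P i| ≤ α ^ (n-2) *
            (2 * α / (α - 1) * ((n - 1).choose (i:ℕ) : ℝ) * r ^ (i:ℕ)) :=
            mul_le_mul hu (hPabs i hi1) (abs_nonneg _) (by positivity)
        _ = α ^ (n-2) * (2 * α / (α - 1)) * (((n - 1).choose (i:ℕ) : ℝ) * r ^ (i:ℕ)) := by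
            ring
    calc |T| ≤ ∑ i ∈ univ.filter (fun i : Fin n => 1 ≤ (i:ℕ)), |uvec n α i * P i| :=
          Finset.abs_sum_le_sum_abs _ _
      _ ≤ ∑ i ∈ univ.filter (fun i : Fin n => 1 ≤ (i:ℕ)), α ^ (n-2) * (2 * α / (α - 1)) *
            (((n - 1).choose (i:ℕ) : ℝ) * r ^ (i:ℕ)) := Finset.sum_le_sum hstep
      _ = α ^ (n-2) * (2 * α / (α - 1)) *
            ∑ i ∈ univ.filter (fun i : Fin n => 1 ≤ (i:ℕ)),
              ((n - 1).choose (i:ℕ) : ℝ) * r ^ (i:ℕ) := by rw [Finset.mul_sum]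
      _ ≤ α ^ (n-2) * (2 * α / (α - 1)) * (1/9) := by
          apply mul_le_mul_of_nonneg_left hgeom
          have h1 : (0:ℝ) ≤ 2 * α / (α - 1) := div_nonneg (by linarith) (by linarith)
          positivity
  -- the quantity w
  have hBpos : (0:ℝ) < α ^ (n-2) := pow_pos hαpos _
  have hcB : α ^ (n-1) = α ^ (n-2) * α := by
    rw [← pow_succ]; congr 1; omega
  set w : ℝ := α ^ (n-2) * α / (α - 1) with hwdef
  have hwpos : 0 < w := div_pos (mul_pos hBpos hαpos) hβ1
  have hcw : α ^ (n-1) / (1 - α) = -w := by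
    rw [hcB, show (1:ℝ) - α = -(α - 1) by ring, div_neg, hwdef]
  have hTw : |T| ≤ (2/9) * w := by
    have heq : α ^ (n-2) * (2 * α / (α - 1)) * (1/9) = (2/9) * w := by
      rw [hwdef]; field_simp
    linarith [hTabs]
  have hcpos : (0:ℝ) < α ^ (n-1) := pow_pos hαpos _
  -- equation for P_0
  have hkey : α ^ (n-1) * P ⟨0, hn0⟩ = -w - T := by
    rw [hcw] at hsplit
    linarith [hsplit]
  have hP0neg : P ⟨0, hn0⟩ < 0 := by
    have h5 : α ^ (n-1) * P ⟨0, hn0⟩ ≤ -w + (2/9) * w := by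
      have := neg_abs_le T
      linarith [hkey, hTw]
    nlinarith [hcpos, hwpos]
  have hP0abs : |P ⟨0, hn0⟩| ≤ (11/9) / (α - 1) := by
    have h6 : |α ^ (n-1) * P ⟨0, hn0⟩| ≤ w + (2/9) * w := by
      rw [hkey, show -w - T = -(w + T) by ring, abs_neg]
      calc |w + T| ≤ |w| + |T| := abs_add_le _ _
        _ ≤ w + (2/9) * w := by rw [abs_of_pos hwpos]; linarith [hTw]
    rw [abs_mul, abs_of_pos hcpos] at h6
    have h7 : (11/9:ℝ) * w = α ^ (n-1) * ((11/9) / (α - 1)) := by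
      rw [hwdef, hcB]; field_simp
    have h8 : α ^ (n-1) * |P ⟨0, hn0⟩| ≤ α ^ (n-1) * ((11/9) / (α - 1)) := by
      linarith [h6, h7.symm.le]
    exact le_of_mul_le_mul_left h8 hcpos
  -- the map takes the left branch
  have hbranch : bcf n aL aR P = bcMat n aL *ᵥ P + bcVec n := by
    unfold bcf
    rw [if_pos]
    intro i hi
    have hieq : i = (⟨0, hn0⟩ : Fin n) := Fin.ext hi
    rw [hieq]
    exact hP0neg.le
  refine ⟨hP0neg, ?_, ?_⟩
  · -- E membership
    show ∑ i : Fin n, uvec n α i * ((bcf n aL aR P) i - Ypt n aL i) = 0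
    rw [hbranch]
    have hexp : ∑ i : Fin n, uvec n α i * ((bcMat n aL *ᵥ P + bcVec n) i - Ypt n aL i) =
        (∑ i : Fin n, uvec n α i * (bcMat n aL *ᵥ P) i) +
        (∑ i : Fin n, uvec n α i * bcVec n i) - (∑ i : Fin n, uvec n α i * Ypt n aL i) := by
      rw [← Finset.sum_add_distrib, ← Finset.sum_sub_distrib]
      exact Finset.sum_congr rfl fun i _ => by simp [Pi.add_apply]; ring
    rw [hexp, hY, uvec_dot_bcVec n hn1 α]
    have hAP : ∑ i : Fin n, uvec n α i * (bcMat n aL *ᵥ P) i =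
        α * (α ^ (n-1) / (1 - α)) := by
      have h1 : ∑ i : Fin n, uvec n α i * (bcMat n aL *ᵥ P) i =
          uvec n α ⬝ᵥ (bcMat n aL *ᵥ P) := rfl
      rw [h1, Matrix.dotProduct_mulVec, uvec_vecMul n hn1 aL α heig,
        smul_dotProduct]
      have h2 : uvec n α ⬝ᵥ P = ∑ i : Fin n, uvec n α i * P i := rfl
      rw [smul_eq_mul, h2, hPsum]
    rw [hAP]
    have h1α : (1:ℝ) - α ≠ 0 := by
      intro h
      have hα1 : α = 1 := by linarith
      rw [hα1] at hα
      linarith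
    field_simp
    ring
  · -- interior of H
    set U : Set (Fin n → ℝ) := {x | ∀ i : Fin n, 1 ≤ (i:ℕ) →
      |x i| < 2 * α / (α - 1) * ((n - 1).choose (i:ℕ) : ℝ) * r ^ (i:ℕ)} with hUdef
    have hUopen : IsOpen U := by
      have : U = ⋂ i : Fin n, {x : Fin n → ℝ | 1 ≤ (i:ℕ) →
          |x i| < 2 * α / (α - 1) * ((n - 1).choose (i:ℕ) : ℝ) * r ^ (i:ℕ)} := by
        ext x; simp [hUdef, Set.mem_iInter]
      rw [this]
      apply isOpen_iInter_of_finite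
      intro i
      rcases Nat.lt_or_ge (i:ℕ) 1 with hi | hi
      · have : {x : Fin n → ℝ | 1 ≤ (i:ℕ) →
            |x i| < 2 * α / (α - 1) * ((n - 1).choose (i:ℕ) : ℝ) * r ^ (i:ℕ)} = Set.univ := by
          ext x; simp; intro h; omega
        rw [this]; exact isOpen_univ
      · have : {x : Fin n → ℝ | 1 ≤ (i:ℕ) →
            |x i| < 2 * α / (α - 1) * ((n - 1).choose (i:ℕ) : ℝ) * r ^ (i:ℕ)} =
            (fun x : Fin n → ℝ => |x i|) ⁻¹'
              (Set.Iio (2 * α / (α - 1) * ((n - 1).choose (i:ℕ) : ℝ) * r ^ (i:ℕ))) := by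
          ext x; simp [hi]
        rw [this]
        exact (isOpen_Iio).preimage ((continuous_apply i).abs)
    have hUsub : U ⊆ Hset n α r := fun x hx i hi => (hx i hi).le
    have hmem : bcf n aL aR P ∈ U := by
      rw [hbranch]
      intro i hi
      -- compute the i-th component
      have hb0 : bcVec n i = 0 := by
        unfold bcVec; rw [if_neg (by omega)]
      have hcomp : (bcMat n aL *ᵥ P + bcVec n) i =
          -aL i * P ⟨0, hn0⟩ + (if h : (i:ℕ)+1 < n then P ⟨(i:ℕ)+1, h⟩ else 0) := by
        rw [Pi.add_apply, hb0, add_zero, bcMat_mulVec n hn0 aL P i]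
      rw [hcomp]
      -- bound pieces
      have hilt := i.isLt
      have hQle : ((n - 1).choose ((i:ℕ)+1) : ℝ) * r ^ ((i:ℕ)+1) ≤
          (((n - 1).choose (i:ℕ) : ℝ) * r ^ (i:ℕ)) / 10 := by
        have hch : ((n-1).choose ((i:ℕ)+1) : ℕ) ≤ (n-1).choose (i:ℕ) * (n-1) := by
          have h1 := Nat.choose_succ_right_eq (n-1) (i:ℕ)
          have h2 : (n-1).choose ((i:ℕ)+1) ≤ (n-1).choose ((i:ℕ)+1) * ((i:ℕ)+1) :=
            Nat.le_mul_of_pos_right _ (by omega)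
          have h3 : (n-1) - (i:ℕ) ≤ (n-1) := Nat.sub_le _ _
          calc (n-1).choose ((i:ℕ)+1) ≤ (n-1).choose ((i:ℕ)+1) * ((i:ℕ)+1) := h2
            _ = (n-1).choose (i:ℕ) * ((n-1) - (i:ℕ)) := h1
            _ ≤ (n-1).choose (i:ℕ) * (n-1) := Nat.mul_le_mul_left _ h3
        have hmr : ((n-1:ℕ) : ℝ) * r ≤ 1/10 := by
          have hcast : ((n - 1 : ℕ) : ℝ) = (n : ℝ) - 1 := by
            push_cast [Nat.cast_sub (by omega : 1 ≤ n)]; ring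
          rw [hcast]; linarith [hrn]
        calc ((n - 1).choose ((i:ℕ)+1) : ℝ) * r ^ ((i:ℕ)+1)
            ≤ (((n-1).choose (i:ℕ) * (n-1) : ℕ) : ℝ) * r ^ ((i:ℕ)+1) :=
              mul_le_mul_of_nonneg_right (Nat.cast_le.mpr hch) (pow_nonneg hr.le _)
          _ = (((n - 1).choose (i:ℕ) : ℝ) * r ^ (i:ℕ)) * (((n-1:ℕ):ℝ) * r) := by
              push_cast; rw [pow_succ]; ring
          _ ≤ (((n - 1).choose (i:ℕ) : ℝ) * r ^ (i:ℕ)) * (1/10) := by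
              apply mul_le_mul_of_nonneg_left hmr
              positivity
          _ = (((n - 1).choose (i:ℕ) : ℝ) * r ^ (i:ℕ)) / 10 := by ring
      have hDpos : (0:ℝ) < ((n - 1).choose (i:ℕ) : ℝ) * r ^ (i:ℕ) := by
        have : 0 < (n-1).choose (i:ℕ) := Nat.choose_pos (by omega)
        have h1 : (0:ℝ) < ((n - 1).choose (i:ℕ) : ℝ) := by exact_mod_cast this
        positivity
      have hQ0 : (0:ℝ) ≤ ((n - 1).choose ((i:ℕ)+1) : ℝ) * r ^ ((i:ℕ)+1) := by positivity
      have hnext : |(if h : (i:ℕ)+1 < n then P ⟨(i:ℕ)+1, h⟩ else 0)| ≤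
          2 * α / (α - 1) * (((n - 1).choose ((i:ℕ)+1) : ℝ) * r ^ ((i:ℕ)+1)) := by
        split_ifs with h
        · have hPa := hPabs ⟨(i:ℕ)+1, h⟩ (Nat.succ_le_succ (Nat.zero_le _))
          have hv : ((⟨(i:ℕ)+1, h⟩ : Fin n) : ℕ) = (i:ℕ)+1 := rfl
          rw [hv] at hPa
          have he : 2 * α / (α - 1) * ((n - 1).choose ((i:ℕ)+1) : ℝ) * r ^ ((i:ℕ)+1) =
              2 * α / (α - 1) * (((n - 1).choose ((i:ℕ)+1) : ℝ) * r ^ ((i:ℕ)+1)) := by ring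
          rw [he] at hPa
          exact hPa
        · rw [abs_zero]
          have h1 : (0:ℝ) ≤ 2 * α / (α - 1) := div_nonneg (by linarith) (by linarith)
          positivity
      have ha1 : |aL i| ≤ ((n - 1).choose ((i:ℕ)+1) : ℝ) * r ^ ((i:ℕ)+1) +
          α * (((n - 1).choose (i:ℕ) : ℝ) * r ^ (i:ℕ)) := by
        have := habs i
        rw [abs_of_pos hαpos] at this
        linarith [this]
      -- final numeric estimate
      set Q : ℝ := ((n - 1).choose ((i:ℕ)+1) : ℝ) * r ^ ((i:ℕ)+1) with hQdef
      set D : ℝ := ((n - 1).choose (i:ℕ) : ℝ) * r ^ (i:ℕ) with hDdef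
      have htri : |(-aL i * P ⟨0, hn0⟩ + (if h : (i:ℕ)+1 < n then P ⟨(i:ℕ)+1, h⟩ else 0))| ≤
          |aL i| * |P ⟨0, hn0⟩| + 2 * α / (α - 1) * Q := by
        calc |(-aL i * P ⟨0, hn0⟩ + _)| ≤ |(-aL i * P ⟨0, hn0⟩)| +
              |(if h : (i:ℕ)+1 < n then P ⟨(i:ℕ)+1, h⟩ else 0)| := abs_add_le _ _
          _ ≤ |aL i| * |P ⟨0, hn0⟩| + 2 * α / (α - 1) * Q := by
              rw [abs_mul, abs_neg]
              exact add_le_add le_rfl hnext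
      have hap : (α - 1) * (|aL i| * |P ⟨0, hn0⟩|) ≤ (Q + α * D) * (11/9) := by
        have h1 : |aL i| * |P ⟨0, hn0⟩| ≤ (Q + α * D) * |P ⟨0, hn0⟩| :=
          mul_le_mul_of_nonneg_right ha1 (abs_nonneg _)
        have h3 : (α - 1) * |P ⟨0, hn0⟩| ≤ 11/9 := by
          have := (le_div_iff₀ hβ1).mp hP0abs
          linarith [this]
        have hQD : (0:ℝ) ≤ Q + α * D := by positivity
        calc (α - 1) * (|aL i| * |P ⟨0, hn0⟩|) ≤ (α - 1) * ((Q + α * D) * |P ⟨0, hn0⟩|) :=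
              mul_le_mul_of_nonneg_left h1 (by linarith)
          _ = (Q + α * D) * ((α - 1) * |P ⟨0, hn0⟩|) := by ring
          _ ≤ (Q + α * D) * (11/9) := mul_le_mul_of_nonneg_left h3 hQD
      have hpoly : (Q + α * D) * (11/9) + 2 * α * Q < 2 * α * D := by
        nlinarith [hQle, hDpos, hα, hQ0, mul_pos hαpos hDpos]
      have h9 : |aL i| * |P ⟨0, hn0⟩| < (2 * α * D - 2 * α * Q) / (α - 1) := by
        rw [lt_div_iff₀ hβ1]
        nlinarith [hap, hpoly]
      have h10 : (2 * α * D - 2 * α * Q) / (α - 1) + 2 * α * Q / (α - 1) =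
          2 * α / (α - 1) * D := by
        rw [← add_div]; ring
      have h11 : 2 * α / (α - 1) * Q = 2 * α * Q / (α - 1) := by ring
      calc |(-aL i * P ⟨0, hn0⟩ + (if h : (i:ℕ)+1 < n then P ⟨(i:ℕ)+1, h⟩ else 0))|
          ≤ |aL i| * |P ⟨0, hn0⟩| + 2 * α / (α - 1) * Q := htri
        _ < (2 * α * D - 2 * α * Q) / (α - 1) + 2 * α * Q / (α - 1) := by
            rw [← h11]; linarith [h9]
        _ = 2 * α / (α - 1) * D := h10
        _ = 2 * α / (α - 1) * ((n - 1).choose (i:ℕ) : ℝ) * r ^ (i:ℕ) := by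
            rw [hDdef]; ring
    exact interior_maximal hUsub hUopen hmem
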